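/- Let M₁ and M₂ be Hermitian positive definite complex n × n matrices with M₂ − M₁ positive semidefinite, and let C be a Hermitian positive semidefinite complex n × n matrix. Then all four determinants det(M₁), det(M₂), det(M₁ + C), det(M₂ + C) are positive real numbers and satisfy det(M₂ + C) · det(M₁) ≤ det(M₁ + C) · det(M₂). Equivalently, the function M ↦ log det(I + M⁻¹ C) is antitone in the Loewner order on positive definite matrices. -/

import Mathlib

open Matrix
open scoped ComplexOrder
open scoped MatrixOrder

section Aux

variable {n : ℕ}

private lemma sandwich_aux {S X : Matrix (Fin n) (Fin n) ℂ} (hS : S.det ≠ 0) :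
    S * (S⁻¹ * X * S⁻¹) * S = X := by
  calc S * (S⁻¹ * X * S⁻¹) * S = (S * S⁻¹) * X * (S⁻¹ * S) := by
        simp only [Matrix.mul_assoc]
    _ = X := by rw [Matrix.mul_nonsing_inv _ (Ne.isUnit hS), Matrix.nonsing_inv_mul _ (Ne.isUnit hS),
        Matrix.one_mul, Matrix.mul_one]

private lemma one_le_det_one_add {P : Matrix (Fin n) (Fin n) ℂ} (hP : P.PosSemidef) :
    (1 : ℂ) ≤ (1 + P).det := by
  have hpd : (1 + P).PosDef := Matrix.PosDef.one.add_posSemidef hP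
  rw [hpd.isHermitian.det_eq_prod_eigenvalues]
  have key : ∀ i, (1 : ℝ) ≤ hpd.isHermitian.eigenvalues i := by
    intro i
    set v : Fin n → ℂ := ⇑(hpd.isHermitian.eigenvectorBasis i) with hv
    have hvne : v ≠ 0 := fun h0 => hpd.isHermitian.eigenvectorBasis.orthonormal.ne_zero i (by simpa [hv] using h0)
    have hmv := hpd.isHermitian.mulVec_eigenvectorBasis i
    have hPv : P *ᵥ v = ((hpd.isHermitian.eigenvalues i : ℂ) - 1) • v := by
      have h1 : (1 + P) *ᵥ v = (hpd.isHermitian.eigenvalues i : ℂ) • v := by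
        simpa using hmv
    -- (1+P) *ᵥ v = v + P *ᵥ v
      have h2 : (1 + P) *ᵥ v = v + P *ᵥ v := by
        rw [Matrix.add_mulVec, Matrix.one_mulVec]
      rw [h2] at h1
      rw [sub_smul, one_smul]
      rw [← h1]
      abel
    have hnn : 0 ≤ dotProduct (star v) (P *ᵥ v) := hP.dotProduct_mulVec_nonneg v
    rw [hPv, dotProduct_smul, smul_eq_mul] at hnn
    have hpos : 0 < dotProduct (star v) v :=
      Matrix.dotProduct_star_self_pos_iff.mpr hvne
    set d : ℂ := dotProduct (star v) v with hd
    have hdre : 0 < d.re := by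
      rw [Complex.lt_def] at hpos
      simpa using hpos.1
    have hdim : d.im = 0 := by
      rw [Complex.lt_def] at hpos
      simpa using hpos.2.symm
    have hre : 0 ≤ (((hpd.isHermitian.eigenvalues i : ℂ) - 1) * d).re := by
      rw [Complex.le_def] at hnn
      simpa using hnn.1
    rw [Complex.mul_re] at hre
    simp only [Complex.sub_re, Complex.ofReal_re, Complex.one_re, Complex.sub_im,
      Complex.ofReal_im, Complex.one_im, hdim, sub_zero, mul_zero, zero_sub, neg_zero,
      zero_mul] at hre
    nlinarith [hre, hdre]
  have hr : (1 : ℝ) ≤ ∏ i, hpd.isHermitian.eigenvalues i := by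
    calc (1 : ℝ) = ∏ _i : Fin n, (1 : ℝ) := by simp
      _ ≤ ∏ i, hpd.isHermitian.eigenvalues i :=
          Finset.prod_le_prod (fun i _ => zero_le_one) (fun i _ => key i)
  have : ((1 : ℝ) : ℂ) ≤ ((∏ i, hpd.isHermitian.eigenvalues i : ℝ) : ℂ) :=
    Complex.real_le_real.mpr hr
  calc (1 : ℂ) = ((1 : ℝ) : ℂ) := by norm_num
    _ ≤ ((∏ i, hpd.isHermitian.eigenvalues i : ℝ) : ℂ) := this
    _ = ∏ i, (hpd.isHermitian.eigenvalues i : ℂ) := by push_cast; rfl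

private lemma det_le_det_add {A P : Matrix (Fin n) (Fin n) ℂ} (hA : A.PosDef)
    (hP : P.PosSemidef) : A.det ≤ (A + P).det := by
  set S := CFC.sqrt A with hSdef
  have hSherm : S.IsHermitian := (CFC.sqrt_nonneg A).posSemidef.1
  have hSS : S * S = A := CFC.sqrt_mul_sqrt_self A hA.posSemidef.nonneg
  have hSdet : S.det ≠ 0 := by
    intro h0
    have : A.det = 0 := by rw [← hSS, Matrix.det_mul, h0, mul_zero]
    exact hA.det_pos.ne' this
  have hSinvH : S⁻¹.IsHermitian := hSherm.inv
  set P' := S⁻¹ * P * S⁻¹ with hP'def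
  have hP' : P'.PosSemidef := by
    have := hP.conjTranspose_mul_mul_same S⁻¹
    rwa [hSinvH.eq] at this
  have heq : A + P = S * (1 + P') * S := by
    rw [Matrix.mul_add, Matrix.add_mul, Matrix.mul_one, hSS, sandwich_aux hSdet]
  have hdet : (A + P).det = A.det * (1 + P').det := by
    rw [heq, Matrix.det_mul, Matrix.det_mul, ← hSS, Matrix.det_mul]
    ring
  rw [hdet]
  calc A.det = A.det * 1 := (mul_one _).symm
    _ ≤ A.det * (1 + P').det :=
        mul_le_mul_of_nonneg_left (one_le_det_one_add hP') hA.det_pos.le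

private lemma det_one_add_add_le {P Q : Matrix (Fin n) (Fin n) ℂ}
    (hP : P.PosSemidef) (hQ : Q.PosSemidef) :
    (1 + (P + Q)).det ≤ (1 + P).det * (1 + Q).det := by
  set T := 1 + P with hTdef
  have hT : T.PosDef := Matrix.PosDef.one.add_posSemidef hP
  have hTdet : T.det ≠ 0 := hT.det_pos.ne'
  have hTinv : T⁻¹.PosDef := hT.inv
  -- W = sqrt of T⁻¹
  set W := CFC.sqrt T⁻¹ with hWdef
  have hWherm : W.IsHermitian := (CFC.sqrt_nonneg T⁻¹).posSemidef.1
  have hWW : W * W = T⁻¹ := CFC.sqrt_mul_sqrt_self T⁻¹ hTinv.posSemidef.nonneg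
  have hWdet : W.det ≠ 0 := by
    intro h0
    have : T⁻¹.det = 0 := by rw [← hWW, Matrix.det_mul, h0, mul_zero]
    exact hTinv.det_pos.ne' this
  have hWTW : W * T * W = 1 := by
    have hTinv_inv : T⁻¹⁻¹ = T := Matrix.nonsing_inv_nonsing_inv _ (Ne.isUnit hTdet)
    calc W * T * W = W * (W * W)⁻¹ * W := by rw [hWW, hTinv_inv]
      _ = W * (W⁻¹ * W⁻¹) * W := by rw [Matrix.mul_inv_rev]
      _ = (W * W⁻¹) * (W⁻¹ * W) := by simp only [Matrix.mul_assoc]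
      _ = 1 := by rw [Matrix.mul_nonsing_inv _ (Ne.isUnit hWdet), Matrix.nonsing_inv_mul _ (Ne.isUnit hWdet),
            Matrix.one_mul]
  have hT1 : T - 1 = P := by rw [hTdef]; abel
  have hsub : (1 : Matrix (Fin n) (Fin n) ℂ) - T⁻¹ = W * P * W := by
    calc (1 : Matrix (Fin n) (Fin n) ℂ) - T⁻¹ = W * T * W - W * 1 * W := by
          rw [hWTW, Matrix.mul_one, hWW]
      _ = W * (T * W) - W * (1 * W) := by simp only [Matrix.mul_assoc]
      _ = W * (T * W - 1 * W) := by rw [Matrix.mul_sub]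
      _ = W * ((T - 1) * W) := by rw [Matrix.sub_mul]
      _ = W * (P * W) := by rw [hT1]
      _ = W * P * W := by rw [Matrix.mul_assoc]
  have hsubPSD : ((1 : Matrix (Fin n) (Fin n) ℂ) - T⁻¹).PosSemidef := by
    rw [hsub]
    have := hP.conjTranspose_mul_mul_same W
    rwa [hWherm.eq] at this
  -- V = sqrt of Q
  set V := CFC.sqrt Q with hVdef
  have hVherm : V.IsHermitian := (CFC.sqrt_nonneg Q).posSemidef.1
  have hVV : V * V = Q := CFC.sqrt_mul_sqrt_self Q hQ.nonneg
  set R := V * T⁻¹ * V with hRdef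
  have hR : R.PosSemidef := by
    have := hTinv.posSemidef.conjTranspose_mul_mul_same V
    rwa [hVherm.eq] at this
  have hQR : (Q - R).PosSemidef := by
    have h1 := hsubPSD.conjTranspose_mul_mul_same V
    rw [hVherm.eq] at h1
    have h2 : V * (1 - T⁻¹) * V = Q - R := by
      rw [Matrix.mul_sub, Matrix.sub_mul, Matrix.mul_one, hVV, hRdef]
    rwa [h2] at h1
  have hdet1 : (1 + (P + Q)).det = T.det * (1 + T⁻¹ * Q).det := by
    have : (1 : Matrix (Fin n) (Fin n) ℂ) + (P + Q) = T * (1 + T⁻¹ * Q) := by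
      rw [Matrix.mul_add, Matrix.mul_one, ← Matrix.mul_assoc,
        Matrix.mul_nonsing_inv _ (Ne.isUnit hTdet), Matrix.one_mul, hTdef]
      abel
    rw [this, Matrix.det_mul]
  have hdet2 : (1 + T⁻¹ * Q).det = (1 + R).det := by
    calc (1 + T⁻¹ * Q).det = (1 + (T⁻¹ * V) * V).det := by
          rw [← hVV, Matrix.mul_assoc]
      _ = (1 + V * (T⁻¹ * V)).det := Matrix.det_one_add_mul_comm _ _
      _ = (1 + R).det := by rw [hRdef, Matrix.mul_assoc]
  have hmono : (1 + R).det ≤ (1 + Q).det := by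
    have h1R : (1 + R).PosDef := Matrix.PosDef.one.add_posSemidef hR
    have := det_le_det_add h1R hQR
    have heq : (1 : Matrix (Fin n) (Fin n) ℂ) + R + (Q - R) = 1 + Q := by abel
    rwa [heq] at this
  calc (1 + (P + Q)).det = T.det * (1 + R).det := by rw [hdet1, hdet2]
    _ ≤ T.det * (1 + Q).det := mul_le_mul_of_nonneg_left hmono hT.det_pos.le
    _ = (1 + P).det * (1 + Q).det := by rw [hTdef]

end Aux

/-- For Hermitian positive definite `M₁ ⪯ M₂` (Loewner order) and PSD `C`, all the
determinants are positive reals and `det(M₂ + C) det(M₁) ≤ det(M₁ + C) det(M₂)`;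
equivalently, `M ↦ log det(I + M⁻¹ C)` is antitone in the Loewner order. -/
theorem logdet_leakage_antitone_loewner {n : ℕ}
    {M₁ M₂ C : Matrix (Fin n) (Fin n) ℂ}
    (h₁ : M₁.PosDef) (h₂ : M₂.PosDef) (h : (M₂ - M₁).PosSemidef)
    (hC : C.PosSemidef) :
    0 < M₁.det ∧ 0 < M₂.det ∧ 0 < (M₁ + C).det ∧ 0 < (M₂ + C).det ∧
      (M₂ + C).det * M₁.det ≤ (M₁ + C).det * M₂.det := by
  refine ⟨h₁.det_pos, h₂.det_pos, (h₁.add_posSemidef hC).det_pos,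
    (h₂.add_posSemidef hC).det_pos, ?_⟩
  set S := CFC.sqrt M₁ with hSdef
  have hSherm : S.IsHermitian := (CFC.sqrt_nonneg M₁).posSemidef.1
  have hSS : S * S = M₁ := CFC.sqrt_mul_sqrt_self M₁ h₁.posSemidef.nonneg
  have hSdet : S.det ≠ 0 := by
    intro h0
    have : M₁.det = 0 := by rw [← hSS, Matrix.det_mul, h0, mul_zero]
    exact h₁.det_pos.ne' this
  have hSinvH : S⁻¹.IsHermitian := hSherm.inv
  set P := S⁻¹ * (M₂ - M₁) * S⁻¹ with hPdef
  set Q := S⁻¹ * C * S⁻¹ with hQdef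
  have hP : P.PosSemidef := by
    have := h.conjTranspose_mul_mul_same S⁻¹
    rwa [hSinvH.eq] at this
  have hQ : Q.PosSemidef := by
    have := hC.conjTranspose_mul_mul_same S⁻¹
    rwa [hSinvH.eq] at this
  have key : ∀ X : Matrix (Fin n) (Fin n) ℂ,
      (S * (1 + S⁻¹ * X * S⁻¹) * S).det = M₁.det * (1 + S⁻¹ * X * S⁻¹).det := by
    intro X
    rw [Matrix.det_mul, Matrix.det_mul, ← hSS, Matrix.det_mul]
    ring
  have e₂C : (M₂ + C).det = M₁.det * (1 + (P + Q)).det := by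
    have heq : M₂ + C = S * (1 + (P + Q)) * S := by
      have : S * (1 + (P + Q)) * S
          = S * S + (S * (S⁻¹ * (M₂ - M₁) * S⁻¹) * S + S * (S⁻¹ * C * S⁻¹) * S) := by
        rw [Matrix.mul_add, Matrix.mul_add, Matrix.mul_one, Matrix.add_mul, Matrix.add_mul]
      rw [this, sandwich_aux hSdet, sandwich_aux hSdet, hSS]
      abel
    rw [heq]
    have := key (M₂ - M₁ + C)
    have hPQ : S⁻¹ * (M₂ - M₁ + C) * S⁻¹ = P + Q := by
      rw [hPdef, hQdef, Matrix.mul_add, Matrix.add_mul]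
    rw [hPQ] at this
    have heq2 : S * (1 + (P + Q)) * S = S * (1 + S⁻¹ * (M₂ - M₁ + C) * S⁻¹) * S := by
      rw [hPQ]
    rw [heq2, key]
    rw [hPQ]
  have e₁C : (M₁ + C).det = M₁.det * (1 + Q).det := by
    have heq : M₁ + C = S * (1 + Q) * S := by
      have : S * (1 + Q) * S = S * S + S * (S⁻¹ * C * S⁻¹) * S := by
        rw [Matrix.mul_add, Matrix.mul_one, Matrix.add_mul]
      rw [this, sandwich_aux hSdet, hSS]
    rw [heq, hQdef, key]
  have e₂ : M₂.det = M₁.det * (1 + P).det := by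
    have heq : M₂ = S * (1 + P) * S := by
      have : S * (1 + P) * S = S * S + S * (S⁻¹ * (M₂ - M₁) * S⁻¹) * S := by
        rw [Matrix.mul_add, Matrix.mul_one, Matrix.add_mul]
      rw [this, sandwich_aux hSdet, hSS]
      abel
    rw [heq, hPdef, key]
  have core : (1 + (P + Q)).det ≤ (1 + P).det * (1 + Q).det :=
    det_one_add_add_le hP hQ
  have hM₁sq : (0 : ℂ) ≤ M₁.det * M₁.det := mul_nonneg h₁.det_pos.le h₁.det_pos.le
  calc (M₂ + C).det * M₁.det = (M₁.det * M₁.det) * (1 + (P + Q)).det := by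
        rw [e₂C]; ring
    _ ≤ (M₁.det * M₁.det) * ((1 + P).det * (1 + Q).det) :=
        mul_le_mul_of_nonneg_left core hM₁sq
    _ = (M₁ + C).det * M₂.det := by rw [e₁C, e₂]; ring
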